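/- arXiv:2403.12822 — 2 statements merged into one kernel-verified Lean document; each statement's English description precedes it below -/
import Mathlib

section
/- With the setup of a parallel system of m linear limit states, the variance of the conditional expectation of the failure indicator given the subvector U_v is Var(E[1_{F_par} | U_v]) = Φ_{2m}(−[B;B]; [[R, R_v],[R_v, R]]) − Φ_m(−B; R)², where P(F_par) = Φ_m(−B; R). -/
open MeasureTheory ProbabilityTheory

/-- The standard Gaussian measure on `ι → ℝ` (i.i.d. standard normal components). -/
noncomputable def stdGaussian (ι : Type*) [Fintype ι] : Measure (ι → ℝ) :=
  Measure.pi fun _ => gaussianReal 0 1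

/-- A `2m × 2n` matrix whose image of a standard Gaussian is a `2m`-variate centered
Gaussian vector with covariance `[[R, R_v], [R_v, R]]`, where `R = AAᵀ` and
`R_v = A_v A_vᵀ`: both copies share the Gaussian inputs on the columns in `v`. -/
def Mblock (m n : ℕ) (A : Matrix (Fin m) (Fin n) ℝ) (v : Finset (Fin n)) :
    Matrix (Fin m ⊕ Fin m) (Fin n ⊕ Fin n) ℝ :=
  fun i j => match i, j with
  | .inl i, .inl j => A i j
  | .inl _, .inr _ => 0
  | .inr i, .inl j => if j ∈ v then A i j else 0
  | .inr i, .inr j => if j ∈ v then 0 else A i j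

lemma evariance_congr_ae {Ω : Type*} [MeasurableSpace Ω] {μ : Measure Ω} {X Y : Ω → ℝ}
    (h : X =ᵐ[μ] Y) : evariance X μ = evariance Y μ := by
  unfold ProbabilityTheory.evariance
  rw [integral_congr_ae h]
  exact lintegral_congr_ae (h.mono fun x hx => by simp only [hx])

lemma variance_congr_ae {Ω : Type*} [MeasurableSpace Ω] {μ : Measure Ω} {X Y : Ω → ℝ}
    (h : X =ᵐ[μ] Y) : variance X μ = variance Y μ := by
  unfold ProbabilityTheory.variance
  rw [evariance_congr_ae h]

lemma measurable_mulVec {ι κ : Type*} [Fintype κ] (M : Matrix ι κ ℝ) (i : ι) :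
    Measurable fun u : κ → ℝ => M.mulVec u i := by
  simp only [Matrix.mulVec, dotProduct]
  exact Finset.measurable_sum _ fun j _ => (measurable_pi_apply j).const_mul _

lemma measurableSet_system {ι κ : Type*} [Countable ι] [Fintype κ] (M : Matrix ι κ ℝ)
    (c : ι → ℝ) : MeasurableSet {u : κ → ℝ | ∀ i, M.mulVec u i ≤ c i} := by
  rw [Set.setOf_forall]
  exact MeasurableSet.iInter fun i => measurableSet_le (measurable_mulVec M i) measurable_const

lemma measurableSet_system' {ι κ : Type*} [Countable ι] [Fintype κ] (M : Matrix ι κ ℝ)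
    (c : ι → ℝ) : MeasurableSet {u : κ → ℝ | ∀ i, c i ≤ M.mulVec u i} := by
  rw [Set.setOf_forall]
  exact MeasurableSet.iInter fun i => measurableSet_le measurable_const (measurable_mulVec M i)

example : IsProbabilityMeasure (stdGaussian (Fin 3)) := by unfold _root_.stdGaussian; infer_instance

lemma negGauss : MeasurePreserving (fun x : ℝ => -x) (gaussianReal 0 1) (gaussianReal 0 1) := by
  refine ⟨measurable_neg, ?_⟩
  have h2 : (fun x : ℝ => -x) = fun x : ℝ => (-1) * x := by funext x; ring
  rw [h2]
  have := gaussianReal_map_const_mul (μ := 0) (v := 1) (-1 : ℝ)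
  simpa using this

def mVdef (n : ℕ) (v : Finset (Fin n)) : MeasurableSpace (Fin n → ℝ) :=
  MeasurableSpace.comap (fun u (j : {x // x ∈ v}) => u j) inferInstance

/-- For the parallel system `F_par = ∩ᵢ {αᵢᵀU ≥ βᵢ}` one has
`Var(E[1_{F_par} | U_v]) = Φ_{2m}(−[B;B]; [[R, R_v],[R_v, R]]) − Φ_m(−B; R)²`,
where `P(F_par) = Φ_m(−B; R)`. -/
theorem stmt12 (m n : ℕ) (A : Matrix (Fin m) (Fin n) ℝ) (hA : ∀ i, ∑ j, (A i j) ^ 2 = 1)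
    (β : Fin m → ℝ) (v : Finset (Fin n)) :
    let μ := stdGaussian (Fin n)
    let Fpar := {u : Fin n → ℝ | ∀ i, β i ≤ A.mulVec u i}
    let mV : MeasurableSpace (Fin n → ℝ) :=
      MeasurableSpace.comap (fun u (j : {x // x ∈ v}) => u j) inferInstance
    let PhiM : ℝ := (μ {u | ∀ i, A.mulVec u i ≤ -β i}).toReal
    variance (μ[Fpar.indicator (fun _ => (1 : ℝ)) | mV]) μ =
        ((stdGaussian (Fin n ⊕ Fin n))
          {w | ∀ i, (Mblock m n A v).mulVec w i
              ≤ Sum.elim (fun k => -β k) (fun k => -β k) i}).toReal - PhiM ^ 2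
      ∧ (μ Fpar).toReal = PhiM := by
  classical
  show variance ((stdGaussian (Fin n))[Set.indicator
        {u : Fin n → ℝ | ∀ i, β i ≤ A.mulVec u i} (fun _ => (1 : ℝ)) | mVdef n v])
        (stdGaussian (Fin n)) =
      ((stdGaussian (Fin n ⊕ Fin n)) {w | ∀ i, (Mblock m n A v).mulVec w i
          ≤ Sum.elim (fun k => -β k) (fun k => -β k) i}).toReal
        - ((stdGaussian (Fin n)) {u | ∀ i, A.mulVec u i ≤ -β i}).toReal ^ 2
    ∧ ((stdGaussian (Fin n)) {u : Fin n → ℝ | ∀ i, β i ≤ A.mulVec u i}).toReal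
        = ((stdGaussian (Fin n)) {u | ∀ i, A.mulVec u i ≤ -β i}).toReal
  set μ : Measure (Fin n → ℝ) := stdGaussian (Fin n) with hμdef
  set Fpar : Set (Fin n → ℝ) := {u : Fin n → ℝ | ∀ i, β i ≤ A.mulVec u i} with hFpar
  set PhiM : ℝ := (μ {u | ∀ i, A.mulVec u i ≤ -β i}).toReal with hPhiMdef
  haveI hPμ : IsProbabilityMeasure μ := by rw [hμdef]; unfold _root_.stdGaussian; infer_instance
  have hFmeas : MeasurableSet Fpar := by rw [hFpar]; exact measurableSet_system' A β
  set γ : Measure ℝ := gaussianReal 0 1 with hγ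
  set ν₁ : Measure ({x : Fin n // x ∈ v} → ℝ) := Measure.pi fun _ => γ with hν₁
  set ν₂ : Measure ({x : Fin n // ¬ x ∈ v} → ℝ) := Measure.pi fun _ => γ with hν₂
  haveI : IsProbabilityMeasure ν₁ := by rw [hν₁]; infer_instance
  haveI : IsProbabilityMeasure ν₂ := by rw [hν₂]; infer_instance
  set e := MeasurableEquiv.piEquivPiSubtypeProd (fun _ : Fin n => ℝ) (· ∈ v) with he
  have hmp : MeasurePreserving e μ (ν₁.prod ν₂) := by
    rw [hμdef, hν₁, hν₂, hγ]; unfold _root_.stdGaussian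
    have h0 := measurePreserving_piEquivPiSubtypeProd (fun _ : Fin n => gaussianReal (0:ℝ) 1)
      (· ∈ v)
    convert h0 using 2
    congr 1
    exact Subsingleton.elim _ _
  set πv : (Fin n → ℝ) → ({x : Fin n // x ∈ v} → ℝ) := fun u j => u j with hπv
  set πc : (Fin n → ℝ) → ({x : Fin n // ¬ x ∈ v} → ℝ) := fun u j => u j with hπc
  have hπvm : Measurable πv := measurable_pi_lambda _ fun j => measurable_pi_apply _
  have hπcm : Measurable πc := measurable_pi_lambda _ fun j => measurable_pi_apply _
  have hπvmap : Measure.map πv μ = ν₁ := by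
    have h1 : πv = Prod.fst ∘ e := rfl
    rw [h1, ← Measure.map_map measurable_fst e.measurable, hmp.map_eq, Measure.map_fst_prod]
    simp
  have hπcmap : Measure.map πc μ = ν₂ := by
    have h1 : πc = Prod.snd ∘ e := rfl
    rw [h1, ← Measure.map_map measurable_snd e.measurable, hmp.map_eq, Measure.map_snd_prod]
    simp
  have hπcmp : MeasurePreserving πc μ ν₂ := ⟨hπcm, hπcmap⟩
  set T : Set (({x : Fin n // x ∈ v} → ℝ) × ({x : Fin n // ¬ x ∈ v} → ℝ)) :=
    e.symm ⁻¹' Fpar with hT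
  have hTmeas : MeasurableSet T := e.symm.measurable hFmeas
  have hFpre : Fpar = e ⁻¹' T := by rw [hT]; ext u; simp
  set sl : ({x : Fin n // x ∈ v} → ℝ) → ENNReal := fun x => ν₂ (Prod.mk x ⁻¹' T) with hsl
  have hslm : Measurable sl := measurable_measure_prodMk_left hTmeas
  have hsl_le : ∀ x, sl x ≤ 1 := fun x => prob_le_one
  have hsl_lt : ∀ x, sl x < ⊤ := fun x => lt_of_le_of_lt (hsl_le x) (by norm_num)
  set g : (Fin n → ℝ) → ℝ := fun u => (sl (πv u)).toReal with hgdef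
  have hgm : Measurable g := (ENNReal.measurable_toReal.comp hslm).comp hπvm
  have hg01 : ∀ u, g u ∈ Set.Icc (0:ℝ) 1 := fun u =>
    ⟨ENNReal.toReal_nonneg, by simpa using ENNReal.toReal_mono ENNReal.one_ne_top (hsl_le (πv u))⟩
  -- key slice computation
  have key : ∀ t : Set ({x : Fin n // x ∈ v} → ℝ), MeasurableSet t →
      μ (πv ⁻¹' t ∩ Fpar) = ∫⁻ x in t, sl x ∂ν₁ := by
    intro t ht
    have hset : πv ⁻¹' t ∩ Fpar = e ⁻¹' ((t ×ˢ Set.univ) ∩ T) := by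
      rw [hFpre]; ext u
      simp only [Set.mem_inter_iff, Set.mem_preimage, Set.mem_prod, Set.mem_univ, and_true]
      constructor
      · rintro ⟨h1, h2⟩; exact ⟨h1, h2⟩
      · rintro ⟨h1, h2⟩; exact ⟨h1, h2⟩
    have hm2 : MeasurableSet ((t ×ˢ Set.univ) ∩ T) := (ht.prod MeasurableSet.univ).inter hTmeas
    rw [hset, hmp.measure_preimage hm2.nullMeasurableSet, Measure.prod_apply hm2,
      ← lintegral_indicator ht]
    refine lintegral_congr fun x => ?_
    by_cases hx : x ∈ t
    · rw [Set.indicator_of_mem hx]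
      congr 1
      ext y
      simp [hx]
    · rw [Set.indicator_of_notMem hx]
      have : Prod.mk x ⁻¹' (t ×ˢ Set.univ ∩ T) = ∅ := by
        ext y; simp [hx]
      simp [this]
  have hμF : μ Fpar = ∫⁻ x, sl x ∂ν₁ := by
    have h0 := key Set.univ MeasurableSet.univ
    simpa using h0
  -- set integrals of g
  have hInt_g : ∀ t : Set ({x : Fin n // x ∈ v} → ℝ), MeasurableSet t →
      ∫ u in πv ⁻¹' t, g u ∂μ = (∫⁻ x in t, sl x ∂ν₁).toReal := by
    intro t ht
    have h1 : ∫ x in t, (sl x).toReal ∂ν₁ = ∫ u in πv ⁻¹' t, g u ∂μ := by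
      rw [← hπvmap]
      exact setIntegral_map ht
        ((ENNReal.measurable_toReal.comp hslm).aestronglyMeasurable) hπvm.aemeasurable
    rw [← h1, integral_toReal (hslm.aemeasurable.restrict) (ae_of_all _ hsl_lt)]
  set f : (Fin n → ℝ) → ℝ := Fpar.indicator (fun _ => (1:ℝ)) with hfdef
  have hf_int : Integrable f μ := (integrable_const 1).indicator hFmeas
  have hInt_f : ∀ t : Set ({x : Fin n // x ∈ v} → ℝ), MeasurableSet t →
      ∫ u in πv ⁻¹' t, f u ∂μ = (∫⁻ x in t, sl x ∂ν₁).toReal := by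
    intro t ht
    rw [hfdef, setIntegral_indicator hFmeas, setIntegral_const, ← key t ht]
    simp
    rfl
  -- conditional expectation identification
  have hmle : mVdef n v ≤ (inferInstance : MeasurableSpace (Fin n → ℝ)) := by
    rintro s ⟨t, ht, rfl⟩
    exact hπvm ht
  haveI : SigmaFinite (μ.trim hmle) := by
    haveI := isFiniteMeasure_trim (μ := μ) hmle
    infer_instance
  have hπv_mV : Measurable[mVdef n v] πv := fun s hs => ⟨s, hs, rfl⟩
  have hgae : AEStronglyMeasurable[mVdef n v] g μ :=
    StronglyMeasurable.aestronglyMeasurable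
      (Measurable.stronglyMeasurable ((ENNReal.measurable_toReal.comp hslm).comp hπv_mV))
  have hg_int : Integrable g μ := by
    refine Integrable.mono' (integrable_const (1:ℝ)) hgm.aestronglyMeasurable
      (ae_of_all _ fun u => ?_)
    rw [Real.norm_eq_abs, abs_of_nonneg (hg01 u).1]
    exact (hg01 u).2
  have hcond : g =ᵐ[μ] μ[f | mVdef n v] := by
    refine ae_eq_condExp_of_forall_setIntegral_eq hmle hf_int
      (fun s hs _ => hg_int.integrableOn) (fun s hs _ => ?_) hgae
    obtain ⟨t, ht, rfl⟩ := hs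
    rw [hInt_g t ht, hInt_f t ht]
  -- moments
  have hmem : MemLp g 2 μ := memLp_of_bounded (ae_of_all _ hg01) hgm.aestronglyMeasurable 2
  have hEg : ∫ u, g u ∂μ = (μ Fpar).toReal := by
    have h0 := hInt_g Set.univ MeasurableSet.univ
    simpa [hμF] using h0
  have hEg2 : ∫ u, (g u)^2 ∂μ = (∫⁻ x, sl x * sl x ∂ν₁).toReal := by
    have h1 : ∫ u, (g u)^2 ∂μ = ∫ x, (sl x * sl x).toReal ∂ν₁ := by
      rw [← hπvmap, integral_map hπvm.aemeasurable (f := fun x => (sl x * sl x).toReal)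
        ((hslm.mul hslm).ennreal_toReal.aestronglyMeasurable)]
      refine integral_congr_ae (ae_of_all _ fun u => ?_)
      rw [hgdef]
      simp [pow_two, ENNReal.toReal_mul]
    rw [h1, integral_toReal (f := fun x => sl x * sl x) ((hslm.mul hslm).aemeasurable)
      (ae_of_all _ fun x => ENNReal.mul_lt_top (hsl_lt x) (hsl_lt x))]
  -- symmetry : P(Fpar) = PhiM
  have hnegμ : MeasurePreserving (fun u : Fin n → ℝ => fun i => -(u i)) μ μ := by
    rw [hμdef]; unfold _root_.stdGaussian
    exact measurePreserving_pi _ _ fun _ => negGauss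
  have hnegrow : ∀ (u : Fin n → ℝ) i, A.mulVec (fun j => -(u j)) i = - A.mulVec u i := by
    intro u i
    simp [Matrix.mulVec, dotProduct, Finset.sum_neg_distrib, mul_comm]
  have hPhiM : (μ Fpar).toReal = PhiM := by
    have hpre : (fun u : Fin n → ℝ => fun i => -(u i)) ⁻¹' Fpar
        = {u | ∀ i, A.mulVec u i ≤ -β i} := by
      rw [hFpar]
      ext u
      simp only [Set.mem_preimage, Set.mem_setOf_eq]
      refine forall_congr' fun i => ?_
      rw [hnegrow u i]
      constructor <;> intro h <;> linarith
    rw [hPhiMdef, ← hpre, hnegμ.measure_preimage hFmeas.nullMeasurableSet]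
  -- the 2m-dimensional Gaussian probability
  set μ2 := stdGaussian (Fin n ⊕ Fin n) with hμ2
  haveI : IsProbabilityMeasure μ2 := by rw [hμ2]; unfold _root_.stdGaussian; infer_instance
  set G2 : Set ((Fin n ⊕ Fin n) → ℝ) := {w | ∀ i, (Mblock m n A v).mulVec w i
      ≤ Sum.elim (fun k => -β k) (fun k => -β k) i} with hG2
  have hG2meas : MeasurableSet G2 := measurableSet_system _ _
  set E := (MeasurableEquiv.sumPiEquivProdPi (fun _ : Fin n ⊕ Fin n => ℝ)).symm with hE
  have hEmp : MeasurePreserving E (μ.prod μ) μ2 := by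
    rw [hμdef, hμ2]; unfold _root_.stdGaussian
    exact measurePreserving_sumPiEquivProdPi_symm (fun _ : Fin n ⊕ Fin n => gaussianReal 0 1)
  set comb : (Fin n → ℝ) → (Fin n → ℝ) → (Fin n → ℝ) :=
    fun u₁ u₂ j => if j ∈ v then u₁ j else u₂ j with hcomb
  have hEapp : ∀ (q : (Fin n → ℝ) × (Fin n → ℝ)) (j : Fin n ⊕ Fin n),
      E q j = Sum.elim q.1 q.2 j := by
    rintro q (j | j) <;> rfl
  have hrow1 : ∀ (u₁ u₂ : Fin n → ℝ) i,
      (Mblock m n A v).mulVec (E (u₁, u₂)) (Sum.inl i) = A.mulVec u₁ i := by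
    intro u₁ u₂ i
    simp only [Matrix.mulVec, dotProduct, Fintype.sum_sum_type, hEapp, Mblock]
    simp
  have hrow2 : ∀ (u₁ u₂ : Fin n → ℝ) i,
      (Mblock m n A v).mulVec (E (u₁, u₂)) (Sum.inr i) = A.mulVec (comb u₁ u₂) i := by
    intro u₁ u₂ i
    simp only [Matrix.mulVec, dotProduct, Fintype.sum_sum_type, hEapp, Mblock]
    rw [← Finset.sum_add_distrib]
    refine Finset.sum_congr rfl fun j _ => ?_
    by_cases hj : j ∈ v <;> simp [hcomb, hj]
  have hEpre : E ⁻¹' G2 = {q : (Fin n → ℝ) × (Fin n → ℝ) |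
      (∀ i, A.mulVec q.1 i ≤ -β i) ∧ (∀ i, A.mulVec (comb q.1 q.2) i ≤ -β i)} := by
    ext ⟨u₁, u₂⟩
    simp only [Set.mem_preimage, hG2, Set.mem_setOf_eq, Sum.forall, hrow1, hrow2, Sum.elim_inl,
      Sum.elim_inr]
  set S : Set ((Fin n → ℝ) × (Fin n → ℝ)) :=
    {q | q.1 ∈ Fpar ∧ comb q.1 q.2 ∈ Fpar} with hS
  have hcombm : Measurable fun q : (Fin n → ℝ) × (Fin n → ℝ) => comb q.1 q.2 := by
    refine measurable_pi_lambda _ fun j => ?_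
    by_cases hj : j ∈ v <;> simp only [hcomb, hj, if_true, if_false]
    · exact (measurable_pi_apply j).comp measurable_fst
    · exact (measurable_pi_apply j).comp measurable_snd
  have hSmeas : MeasurableSet S :=
    (hFmeas.preimage measurable_fst).inter (hFmeas.preimage hcombm)
  have hNpre : (Prod.map (fun u : Fin n → ℝ => fun i => -(u i))
      (fun u : Fin n → ℝ => fun i => -(u i))) ⁻¹' (E ⁻¹' G2) = S := by
    rw [hEpre]
    ext ⟨u₁, u₂⟩
    simp only [Set.mem_preimage, Prod.map_apply, Set.mem_setOf_eq, hS, hFpar]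
    have hcombneg : comb (fun j => -(u₁ j)) (fun j => -(u₂ j)) = fun j => -(comb u₁ u₂ j) := by
      funext j
      by_cases hj : j ∈ v <;> simp [hcomb, hj]
    rw [hcombneg]
    constructor
    · rintro ⟨h1, h2⟩
      exact ⟨fun i => by have := h1 i; rw [hnegrow] at this; linarith,
             fun i => by have := h2 i; rw [hnegrow] at this; linarith⟩
    · rintro ⟨h1, h2⟩
      exact ⟨fun i => by rw [hnegrow]; have := h1 i; linarith,
             fun i => by rw [hnegrow]; have := h2 i; linarith⟩
  have hμ2G2 : μ2 G2 = (μ.prod μ) S := by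
    rw [← hEmp.measure_preimage hG2meas.nullMeasurableSet, ← hNpre,
      (hnegμ.prod hnegμ).measure_preimage (E.measurable hG2meas).nullMeasurableSet]
  have hSapply : (μ.prod μ) S = ∫⁻ u₁ in Fpar, sl (πv u₁) ∂μ := by
    rw [Measure.prod_apply hSmeas, ← lintegral_indicator hFmeas]
    refine lintegral_congr fun u₁ => ?_
    by_cases h1 : u₁ ∈ Fpar
    · rw [Set.indicator_of_mem h1]
      have hslice : Prod.mk u₁ ⁻¹' S = πc ⁻¹' (Prod.mk (πv u₁) ⁻¹' T) := by
        ext u₂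
        have hcombe : comb u₁ u₂ = e.symm (πv u₁, πc u₂) := by
          funext j
          have hq : (e.symm (πv u₁, πc u₂)) j = if h : j ∈ v then u₁ j else u₂ j := rfl
          rw [hq, hcomb]
          by_cases hj : j ∈ v <;> simp [hj]
        constructor
        · rintro ⟨-, h2⟩
          show e.symm (πv u₁, πc u₂) ∈ Fpar
          rw [← hcombe]; exact h2
        · intro h2
          refine ⟨h1, ?_⟩
          rw [hcombe]; exact h2
      rw [hslice, hπcmp.measure_preimage
        ((hTmeas.preimage measurable_prodMk_left).nullMeasurableSet)]
    · rw [Set.indicator_of_notMem h1]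
      have hslice : Prod.mk u₁ ⁻¹' S = ∅ := by
        ext u₂; simp [hS, h1]
      simp [hslice]
  have hfinal : ∫⁻ u₁ in Fpar, sl (πv u₁) ∂μ = ∫⁻ x, sl x * sl x ∂ν₁ := by
    have hslfst : Measurable (fun q : ({x : Fin n // x ∈ v} → ℝ) × ({x : Fin n // ¬ x ∈ v} → ℝ)
        => sl q.1) := hslm.comp measurable_fst
    have hres : ∫⁻ u₁ in Fpar, sl (πv u₁) ∂μ = ∫⁻ q in T, sl q.1 ∂(ν₁.prod ν₂) := by
      rw [hFpre]
      exact (hmp.restrict_preimage hTmeas).lintegral_comp hslfst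
    rw [hres, ← lintegral_indicator hTmeas,
      lintegral_prod _ ((hslfst.indicator hTmeas).aemeasurable)]
    refine lintegral_congr fun x => ?_
    have hpt : ∀ y, T.indicator (fun q => sl q.1) (x, y)
        = (Prod.mk x ⁻¹' T).indicator (fun _ => sl x) y := by
      intro y
      by_cases hy : (x, y) ∈ T <;> simp [Set.indicator, hy]
    simp_rw [hpt]
    rw [lintegral_indicator_const (hTmeas.preimage measurable_prodMk_left)]
  -- assemble
  refine ⟨?_, hPhiM⟩
  rw [← variance_congr_ae hcond, variance_eq_sub hmem]
  have hp2 : μ[g ^ 2] = ∫ u, (g u)^2 ∂μ := by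
    refine integral_congr_ae (ae_of_all _ fun u => ?_)
    simp [pow_two]
  have hp1 : μ[g] = ∫ u, g u ∂μ := rfl
  rw [hp2, hp1, hEg2, hEg, hPhiM, hμ2G2, hSapply, hfinal]
end

section
/- With the setup of a series system of m linear limit states, F_ser = ∪_{i=1}^m {αᵢᵀU ≥ βᵢ}, the variance of the conditional expectation of the failure indicator given U_v is Var(E[1_{F_ser} | U_v]) = Φ_{2m}([B;B]; [[R, R_v],[R_v, R]]) − (1 − P(F_ser))², where P(F_ser) = 1 − Φ_m(B; R). -/
open MeasureTheory ProbabilityTheory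

instance (ι : Type*) [Fintype ι] : IsProbabilityMeasure (stdGaussian ι) := by
  unfold _root_.stdGaussian; infer_instance

instance : NullSingletonClass (gaussianReal 0 1) :=
  ⟨fun x => gaussianReal_absolutelyContinuous 0 one_ne_zero (measure_singleton x)⟩

lemma stdGaussian_map_reindex {ι κ : Type*} [Fintype ι] [Fintype κ]
    (f : κ → ι) (hf : Function.Injective f) :
    (stdGaussian ι).map (fun u k => u (f k)) = stdGaussian κ := by
  classical
  have hmeas : Measurable (fun (u : ι → ℝ) k => u (f k)) :=
    measurable_pi_lambda _ fun k => measurable_pi_apply _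
  unfold _root_.stdGaussian
  refine (Measure.pi_eq fun s hs => ?_).symm
  rw [Measure.map_apply hmeas (MeasurableSet.univ_pi hs)]
  have hpre : (fun (u : ι → ℝ) k => u (f k)) ⁻¹' (Set.pi Set.univ s)
      = Set.pi Set.univ (fun i => if h : ∃ k, f k = i then s h.choose else Set.univ) := by
    ext u
    simp only [Set.mem_preimage, Set.mem_pi, Set.mem_univ, true_implies]
    constructor
    · intro h i
      by_cases hi : ∃ k, f k = i
      · rw [dif_pos hi]
        have h4 := h hi.choose
        rwa [hi.choose_spec] at h4
      · simp [hi]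
    · intro h k
      have hk : ∃ k', f k' = f k := ⟨k, rfl⟩
      have h2 := h (f k)
      simp only [hk, dif_pos] at h2
      have h3 : hk.choose = k := hf hk.choose_spec
      rwa [h3] at h2
  rw [hpre, Measure.pi_pi]
  rw [← Finset.prod_subset (Finset.subset_univ (Finset.univ.image f))
      (fun i _ hi => ?_)]
  · rw [Finset.prod_image (fun a _ b _ h => hf h)]
    refine Finset.prod_congr rfl fun k _ => ?_
    have hk : ∃ k', f k' = f k := ⟨k, rfl⟩
    rw [dif_pos hk]
    congr 1
    exact congrArg s (hf hk.choose_spec)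
  · have : ¬ ∃ k, f k = i := by
      intro ⟨k, hk⟩; exact hi (Finset.mem_image.2 ⟨k, Finset.mem_univ k, hk⟩)
    rw [dif_neg this]
    exact measure_univ

lemma stdGaussian_hyperplane_null {ι : Type*} [Fintype ι] [DecidableEq ι]
    (c : ι → ℝ) (j₀ : ι) (hc : c j₀ ≠ 0) (b : ℝ) :
    stdGaussian ι {u | ∑ j, c j * u j = b} = 0 := by
  classical
  set p : ι → Prop := fun j => j ≠ j₀ with hp
  have hSmeas : MeasurableSet {u : ι → ℝ | ∑ j, c j * u j = b} :=
    measurableSet_eq_fun (by fun_prop) measurable_const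
  let e := MeasurableEquiv.piEquivPiSubtypeProd (fun _ : ι => ℝ) p
  have hmp : MeasurePreserving e (stdGaussian ι)
      ((Measure.pi fun _ : {j // p j} => gaussianReal 0 1).prod
        (Measure.pi fun _ : {j // ¬ p j} => gaussianReal 0 1)) :=
    measurePreserving_piEquivPiSubtypeProd (fun _ : ι => gaussianReal 0 1) p
  have hT : MeasurableSet (e.symm ⁻¹' {u : ι → ℝ | ∑ j, c j * u j = b}) :=
    e.symm.measurable hSmeas
  have hre : {u : ι → ℝ | ∑ j, c j * u j = b}
      = e ⁻¹' (e.symm ⁻¹' {u | ∑ j, c j * u j = b}) := by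
    ext u; simp
  rw [hre, hmp.measure_preimage hT.nullMeasurableSet, Measure.prod_apply hT]
  have hj₀ : ¬ p j₀ := by simp [hp]
  have hslice : ∀ x : {j // p j} → ℝ,
      (Prod.mk x ⁻¹' (e.symm ⁻¹' {u : ι → ℝ | ∑ j, c j * u j = b}))
        = {y : {j // ¬ p j} → ℝ | y ⟨j₀, hj₀⟩
            = (b - ∑ j : {j // p j}, c j * x j) / c j₀} := by
    intro x
    ext y
    have happ : ∀ j : ι, e.symm (x, y) j = if h : p j then x ⟨j, h⟩ else y ⟨j, h⟩ := by
      intro j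
      show (Equiv.piEquivPiSubtypeProd p (fun _ : ι => ℝ)).symm (x, y) j = _
      rw [Equiv.piEquivPiSubtypeProd_symm_apply]
    have hsum : ∑ j, c j * (e.symm (x, y) j)
        = c j₀ * y ⟨j₀, hj₀⟩ + ∑ j : {j // p j}, c j * x j := by
      rw [← Finset.add_sum_erase _ _ (Finset.mem_univ j₀)]
      congr 1
      · rw [happ j₀, dif_neg hj₀]
      · rw [Finset.sum_subtype (p := p) (s := Finset.univ.erase j₀)
            (fun j => by simp [hp, Finset.mem_erase]) (f := fun j => c j * e.symm (x, y) j)]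
        refine Finset.sum_congr rfl fun j _ => ?_
        rw [happ j, dif_pos j.2]
    simp only [Set.mem_preimage, Set.mem_setOf_eq, hsum]
    rw [eq_div_iff hc]
    constructor
    · intro h; linarith
    · intro h; linarith
  rw [lintegral_congr fun x => by rw [hslice x]]
  have : ∀ x : {j // p j} → ℝ,
      (Measure.pi fun _ : {j // ¬ p j} => gaussianReal 0 1)
        {y : {j // ¬ p j} → ℝ | y ⟨j₀, hj₀⟩ = (b - ∑ j : {j // p j}, c j * x j) / c j₀} = 0 :=
    fun x => Measure.pi_hyperplane _ _ _
  simp only [this, lintegral_zero]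

section PatchAux

variable {n : ℕ}

/-- Combine two vectors: coordinates in `v` from the first, the rest from the second. -/
noncomputable def patchFn (v : Finset (Fin n)) (x y : Fin n → ℝ) : Fin n → ℝ :=
  fun j => if j ∈ v then x j else y j

lemma measurable_patchFn (v : Finset (Fin n)) :
    Measurable (fun p : (Fin n → ℝ) × (Fin n → ℝ) => patchFn v p.1 p.2) := by
  apply measurable_pi_lambda
  intro j
  by_cases h : j ∈ v <;> simp only [patchFn, h, if_true, if_false]
  · exact (measurable_pi_apply j).comp measurable_fst
  · exact (measurable_pi_apply j).comp measurable_snd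

lemma patchFn_patchFn (v : Finset (Fin n)) (x y z : Fin n → ℝ) :
    patchFn v (patchFn v x y) z = patchFn v x z := by
  funext j; by_cases h : j ∈ v <;> simp [patchFn, h]

lemma patchFn_patchFn' (v : Finset (Fin n)) (x y : Fin n → ℝ) :
    patchFn v (patchFn v x y) (patchFn v y x) = x := by
  funext j; by_cases h : j ∈ v <;> simp [patchFn, h]

/-- The measurable equivalence `(Fin n ⊕ Fin n → ℝ) ≃ᵐ (Fin n → ℝ) × (Fin n → ℝ)`. -/
noncomputable def e2 (n : ℕ) : ((Fin n ⊕ Fin n) → ℝ) ≃ᵐ ((Fin n → ℝ) × (Fin n → ℝ)) :=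
  MeasurableEquiv.sumPiEquivProdPi (fun _ : Fin n ⊕ Fin n => ℝ)

lemma e2_apply (w : (Fin n ⊕ Fin n) → ℝ) :
    e2 n w = (fun j => w (Sum.inl j), fun j => w (Sum.inr j)) := rfl

lemma prod_eq_map_e2 (n : ℕ) :
    (stdGaussian (Fin n)).prod (stdGaussian (Fin n))
      = (stdGaussian (Fin n ⊕ Fin n)).map (e2 n) :=
  ((measurePreserving_sumPiEquivProdPi
    (fun _ : Fin n ⊕ Fin n => gaussianReal 0 1)).map_eq).symm

noncomputable def tauF (v : Finset (Fin n)) : Fin n → Fin n ⊕ Fin n :=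
  fun j => if j ∈ v then Sum.inl j else Sum.inr j

lemma tauF_injective (v : Finset (Fin n)) : Function.Injective (tauF v) := by
  intro a b h
  unfold tauF at h
  by_cases ha : a ∈ v <;> by_cases hb : b ∈ v <;> simp [ha, hb] at h <;> exact h

noncomputable def sigF (v : Finset (Fin n)) : Fin n ⊕ Fin n → Fin n ⊕ Fin n :=
  Sum.elim (fun j => if j ∈ v then Sum.inl j else Sum.inr j)
    (fun j => if j ∈ v then Sum.inr j else Sum.inl j)

lemma sigF_involutive (v : Finset (Fin n)) : Function.Involutive (sigF v) := by
  intro s; rcases s with j | j <;> by_cases h : j ∈ v <;> simp [sigF, h]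

lemma map_patchFn (v : Finset (Fin n)) :
    ((stdGaussian (Fin n)).prod (stdGaussian (Fin n))).map
      (fun p => patchFn v p.1 p.2) = stdGaussian (Fin n) := by
  rw [prod_eq_map_e2, Measure.map_map (measurable_patchFn v) (e2 n).measurable]
  have hcomp : ((fun p : (Fin n → ℝ) × (Fin n → ℝ) => patchFn v p.1 p.2) ∘ (e2 n))
      = fun w k => w (tauF v k) := by
    funext w
    funext k
    by_cases h : k ∈ v <;> simp [patchFn, e2_apply, tauF, h, Function.comp]
  rw [hcomp, stdGaussian_map_reindex _ (tauF_injective v)]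

lemma measurable_TFn (v : Finset (Fin n)) :
    Measurable (fun p : (Fin n → ℝ) × (Fin n → ℝ) =>
      (patchFn v p.1 p.2, patchFn v p.2 p.1)) := by
  refine Measurable.prodMk (measurable_patchFn v) ?_
  exact (measurable_patchFn v).comp measurable_swap

lemma map_TFn (v : Finset (Fin n)) :
    ((stdGaussian (Fin n)).prod (stdGaussian (Fin n))).map
      (fun p => (patchFn v p.1 p.2, patchFn v p.2 p.1))
      = (stdGaussian (Fin n)).prod (stdGaussian (Fin n)) := by
  conv_lhs => rw [prod_eq_map_e2]
  rw [Measure.map_map (measurable_TFn v) (e2 n).measurable]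
  have hre : Measurable (fun (w : (Fin n ⊕ Fin n) → ℝ) k => w (sigF v k)) :=
    measurable_pi_lambda _ fun k => measurable_pi_apply _
  have hcomp : ((fun p : (Fin n → ℝ) × (Fin n → ℝ) =>
        (patchFn v p.1 p.2, patchFn v p.2 p.1)) ∘ (e2 n))
      = (e2 n) ∘ (fun w k => w (sigF v k)) := by
    funext w
    apply Prod.ext <;> funext j <;> by_cases h : j ∈ v <;>
      simp [patchFn, e2_apply, sigF, h, Function.comp]
  rw [hcomp, ← Measure.map_map (e2 n).measurable hre,
    stdGaussian_map_reindex _ (sigF_involutive v).injective, ← prod_eq_map_e2]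

lemma integral_comp_TFn (v : Finset (Fin n)) (k : (Fin n → ℝ) × (Fin n → ℝ) → ℝ)
    (hk : AEStronglyMeasurable k ((stdGaussian (Fin n)).prod (stdGaussian (Fin n)))) :
    ∫ p, k p ∂((stdGaussian (Fin n)).prod (stdGaussian (Fin n)))
      = ∫ p, k (patchFn v p.1 p.2, patchFn v p.2 p.1)
          ∂((stdGaussian (Fin n)).prod (stdGaussian (Fin n))) := by
  conv_lhs => rw [← map_TFn v]
  rw [integral_map (measurable_TFn v).aemeasurable (by rw [map_TFn v]; exact hk)]

lemma integral_comp_patchFn (v : Finset (Fin n)) (h : (Fin n → ℝ) → ℝ)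
    (hh : AEStronglyMeasurable h (stdGaussian (Fin n))) :
    ∫ p, h (patchFn v p.1 p.2) ∂((stdGaussian (Fin n)).prod (stdGaussian (Fin n)))
      = ∫ u, h u ∂(stdGaussian (Fin n)) := by
  conv_rhs => rw [← map_patchFn v]
  rw [integral_map (measurable_patchFn v).aemeasurable (by rw [map_patchFn v]; exact hh)]

lemma integral_fst_prod (v : Finset (Fin n)) (h : (Fin n → ℝ) → ℝ)
    (hh : AEStronglyMeasurable h (stdGaussian (Fin n))) :
    ∫ p, h p.1 ∂((stdGaussian (Fin n)).prod (stdGaussian (Fin n)))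
      = ∫ u, h u ∂(stdGaussian (Fin n)) := by
  have hfst : ((stdGaussian (Fin n)).prod (stdGaussian (Fin n))).map Prod.fst
      = stdGaussian (Fin n) := by
    rw [Measure.map_fst_prod]; simp
  conv_rhs => rw [← hfst]
  rw [integral_map measurable_fst.aemeasurable (by rw [hfst]; exact hh)]

end PatchAux

section Series

variable {m n : ℕ}

lemma measurable_mulVec_apply (A : Matrix (Fin m) (Fin n) ℝ) (i : Fin m) :
    Measurable (fun u : Fin n → ℝ => A.mulVec u i) := by
  have : (fun u : Fin n → ℝ => A.mulVec u i) = fun u => ∑ j, A i j * u j := by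
    funext u; simp [Matrix.mulVec, dotProduct]
  rw [this]
  fun_prop

lemma mulVec_hyperplane_null (A : Matrix (Fin m) (Fin n) ℝ) {i : Fin m}
    (hA : ∑ j, (A i j) ^ 2 = 1) (b : ℝ) :
    stdGaussian (Fin n) {u | A.mulVec u i = b} = 0 := by
  obtain ⟨j₀, hj₀⟩ : ∃ j, A i j ≠ 0 := by
    by_contra h
    push_neg at h
    rw [Finset.sum_eq_zero (fun j _ => by rw [h j]; ring)] at hA
    norm_num at hA
  have hset : {u : Fin n → ℝ | A.mulVec u i = b} = {u | ∑ j, A i j * u j = b} := by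
    ext u; simp [Matrix.mulVec, dotProduct]
  rw [hset]
  exact stdGaussian_hyperplane_null _ j₀ hj₀ b

end Series

/-- The sub-σ-algebra generated by the coordinates in `v`. -/
def mVd (n : ℕ) (v : Finset (Fin n)) : MeasurableSpace (Fin n → ℝ) :=
  MeasurableSpace.comap (fun u (j : {x // x ∈ v}) => u j) inferInstance

section SeriesMain

variable {m n : ℕ}

lemma series_conj2 (A : Matrix (Fin m) (Fin n) ℝ) (hA : ∀ i, ∑ j, (A i j) ^ 2 = 1)
    (β : Fin m → ℝ) :
    ((stdGaussian (Fin n)) {u | ∃ i, β i ≤ A.mulVec u i}).toReal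
      = 1 - ((stdGaussian (Fin n)) {u | ∀ i, A.mulVec u i ≤ β i}).toReal := by
  set μ := stdGaussian (Fin n) with hμ
  set Fser : Set (Fin n → ℝ) := {u | ∃ i, β i ≤ A.mulVec u i} with hFdef
  set C : Set (Fin n → ℝ) := {u | ∀ i, A.mulVec u i ≤ β i} with hCdef
  have hCmeas : MeasurableSet C := by
    have : C = ⋂ i, {u : Fin n → ℝ | A.mulVec u i ≤ β i} := by
      ext u; simp [hCdef, Set.mem_iInter]
    rw [this]
    exact MeasurableSet.iInter fun i =>
      measurableSet_le (measurable_mulVec_apply A i) measurable_const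
  have hNnull : μ (⋃ i, {u | A.mulVec u i = β i}) = 0 :=
    measure_iUnion_null fun i => mulVec_hyperplane_null A (hA i) (β i)
  have hsubN : Fser ∩ C ⊆ ⋃ i, {u | A.mulVec u i = β i} := by
    rintro u ⟨⟨i, hi⟩, hu⟩
    exact Set.mem_iUnion.2 ⟨i, le_antisymm (hu i) hi⟩
  have hFC_union : Fser ∪ C = Set.univ := by
    ext u
    simp only [Set.mem_union, Set.mem_univ, iff_true]
    by_cases h : ∃ i, β i ≤ A.mulVec u i
    · exact Or.inl h
    · push_neg at h
      exact Or.inr fun i => (h i).le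
  have hFCinter : μ (Fser ∩ C) = 0 := measure_mono_null hsubN hNnull
  have hadd : μ Fser + μ C = 1 := by
    have h1 := measure_union_add_inter (μ := μ) Fser hCmeas
    rw [hFC_union, hFCinter, measure_univ, add_zero] at h1
    exact h1.symm
  have h2 := congrArg ENNReal.toReal hadd
  rw [ENNReal.toReal_add (measure_ne_top μ _) (measure_ne_top μ _), ENNReal.toReal_one] at h2
  linarith

end SeriesMain

section SeriesVar

variable {m n : ℕ}

lemma series_var (A : Matrix (Fin m) (Fin n) ℝ) (hA : ∀ i, ∑ j, (A i j) ^ 2 = 1)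
    (β : Fin m → ℝ) (v : Finset (Fin n)) :
    variance ((stdGaussian (Fin n))[({u : Fin n → ℝ | ∃ i, β i ≤ A.mulVec u i}).indicator
        (fun _ => (1 : ℝ)) | mVd n v]) (stdGaussian (Fin n))
      = ((stdGaussian (Fin n ⊕ Fin n))
          {w | ∀ i, (Mblock m n A v).mulVec w i
              ≤ Sum.elim (fun k => β k) (fun k => β k) i}).toReal
        - (1 - ((stdGaussian (Fin n))
            {u : Fin n → ℝ | ∃ i, β i ≤ A.mulVec u i}).toReal) ^ 2 := by
  classical
  set Fser : Set (Fin n → ℝ) := {u | ∃ i, β i ≤ A.mulVec u i} with hFdef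
  set C : Set (Fin n → ℝ) := {u | ∀ i, A.mulVec u i ≤ β i} with hCdef
  set f : (Fin n → ℝ) → ℝ := Fser.indicator (fun _ => (1 : ℝ)) with hfdef
  have hFmeas : MeasurableSet Fser := by
    have h : Fser = ⋃ i, {u : Fin n → ℝ | β i ≤ A.mulVec u i} := by
      ext u; simp [hFdef, Set.mem_iUnion]
    rw [h]
    exact MeasurableSet.iUnion fun i =>
      measurableSet_le measurable_const (measurable_mulVec_apply A i)
  have hCmeas : MeasurableSet C := by
    have h : C = ⋂ i, {u : Fin n → ℝ | A.mulVec u i ≤ β i} := by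
      ext u; simp [hCdef, Set.mem_iInter]
    rw [h]
    exact MeasurableSet.iInter fun i =>
      measurableSet_le (measurable_mulVec_apply A i) measurable_const
  set N : Set (Fin n → ℝ) := ⋃ i, {u | A.mulVec u i = β i} with hNdef
  have hNmeas : MeasurableSet N :=
    MeasurableSet.iUnion fun i =>
      measurableSet_eq_fun (measurable_mulVec_apply A i) measurable_const
  have hNnull : stdGaussian (Fin n) N = 0 :=
    measure_iUnion_null fun i => mulVec_hyperplane_null A (hA i) (β i)
  have hsubN : Fser ∩ C ⊆ N := by
    rintro u ⟨⟨i, hi⟩, hu⟩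
    exact Set.mem_iUnion.2 ⟨i, le_antisymm (hu i) hi⟩
  have hFC_union : Fser ∪ C = Set.univ := by
    ext u
    simp only [Set.mem_union, Set.mem_univ, iff_true]
    by_cases h : ∃ i, β i ≤ A.mulVec u i
    · exact Or.inl h
    · push_neg at h
      exact Or.inr fun i => (h i).le
  -- indicator function basics
  have hfmeas : Measurable f := measurable_const.indicator hFmeas
  have hf_bdd : ∀ u, ‖f u‖ ≤ 1 := by
    intro u
    rw [hfdef]
    by_cases h : u ∈ Fser
    · rw [Set.indicator_of_mem h]; simp
    · rw [Set.indicator_of_notMem h]; simp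
  have hf_int : Integrable f (stdGaussian (Fin n)) := (integrable_const (1 : ℝ)).indicator hFmeas
  have hfpm : Measurable (fun p : (Fin n → ℝ) × (Fin n → ℝ) => f (patchFn v p.1 p.2)) :=
    hfmeas.comp (measurable_patchFn v)
  -- the conditional expectation candidate
  set g : (Fin n → ℝ) → ℝ := fun u => ∫ y, f (patchFn v u y) ∂(stdGaussian (Fin n)) with hgdef
  have hgmeas : Measurable g :=
    (hfpm.stronglyMeasurable.integral_prod_right' (ν := stdGaussian (Fin n))).measurable
  have hg_bdd : ∀ u, ‖g u‖ ≤ 1 := by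
    intro u
    have h := norm_integral_le_of_norm_le_const (μ := stdGaussian (Fin n))
      (f := fun y => f (patchFn v u y)) (C := 1) (ae_of_all _ fun y => hf_bdd _)
    simpa using h
  have hg_int : Integrable g (stdGaussian (Fin n)) :=
    Integrable.mono' (integrable_const 1) hgmeas.aestronglyMeasurable (ae_of_all _ hg_bdd)
  have hg_mem : MemLp g 2 (stdGaussian (Fin n)) :=
    MemLp.of_bound hgmeas.aestronglyMeasurable 1 (ae_of_all _ hg_bdd)
  have hg_patch : ∀ u y, g (patchFn v u y) = g u := by
    intro u y
    show (∫ z, f (patchFn v (patchFn v u y) z) ∂(stdGaussian (Fin n))) = _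
    rw [hgdef]
    congr 1
    funext z
    rw [patchFn_patchFn]
  -- measurability with respect to the sub-σ-algebra
  have hπmeas : Measurable (fun u : Fin n → ℝ => fun j : {x // x ∈ v} => u ↑j) :=
    measurable_pi_lambda _ fun j => measurable_pi_apply _
  have hm : mVd n v ≤ (inferInstance : MeasurableSpace (Fin n → ℝ)) := hπmeas.comap_le
  have hGmeas : Measurable (fun x : {x // x ∈ v} → ℝ =>
      ∫ y, f (patchFn v (fun j => if h : j ∈ v then x ⟨j, h⟩ else 0) y)
        ∂(stdGaussian (Fin n))) := by
    apply StronglyMeasurable.measurable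
    apply StronglyMeasurable.integral_prod_right'
      (f := fun p : ({x // x ∈ v} → ℝ) × (Fin n → ℝ) =>
        f (patchFn v (fun j => if h : j ∈ v then p.1 ⟨j, h⟩ else 0) p.2))
    apply Measurable.stronglyMeasurable
    have hextm : Measurable (fun p : ({x // x ∈ v} → ℝ) × (Fin n → ℝ) =>
        (fun j => if h : j ∈ v then p.1 ⟨j, h⟩ else 0 : Fin n → ℝ)) := by
      apply measurable_pi_lambda
      intro j
      by_cases h : j ∈ v
      · simp only [dif_pos h]
        exact (measurable_pi_apply _).comp measurable_fst
      · simp only [dif_neg h]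
        exact measurable_const
    exact hfmeas.comp ((measurable_patchFn v).comp (hextm.prodMk measurable_snd))
  have hg_mV : Measurable[mVd n v] g := by
    have hπm : Measurable[mVd n v] (fun u : Fin n → ℝ => fun j : {x // x ∈ v} => u ↑j) :=
      Measurable.of_comap_le le_rfl
    have hfact : g = (fun x : {x // x ∈ v} → ℝ =>
        ∫ y, f (patchFn v (fun j => if h : j ∈ v then x ⟨j, h⟩ else 0) y)
          ∂(stdGaussian (Fin n))) ∘ (fun (u : Fin n → ℝ) (j : {x // x ∈ v}) => u ↑j) := by
      funext u
      simp only [Function.comp, hgdef]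
      congr 1
      funext y
      congr 1
      funext j
      by_cases h : j ∈ v <;> simp [patchFn, h]
    rw [hfact]
    exact hGmeas.comp hπm
  have hg_aesm : AEStronglyMeasurable[mVd n v] g (stdGaussian (Fin n)) :=
    StronglyMeasurable.aestronglyMeasurable (Measurable.stronglyMeasurable hg_mV)
  -- the set-integral property
  have hsetint : ∀ s, MeasurableSet[mVd n v] s → (stdGaussian (Fin n)) s < ⊤ →
      ∫ x in s, g x ∂(stdGaussian (Fin n)) = ∫ x in s, f x ∂(stdGaussian (Fin n)) := by
    intro s hs _
    have hs' : ∃ t : Set ({x // x ∈ v} → ℝ), MeasurableSet t ∧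
        (fun (u : Fin n → ℝ) (j : {x // x ∈ v}) => u ↑j) ⁻¹' t = s := hs
    obtain ⟨t, ht, rfl⟩ := hs'
    have hst : MeasurableSet ((fun (u : Fin n → ℝ) (j : {x // x ∈ v}) => u ↑j) ⁻¹' t) := hπmeas ht
    set χ : (Fin n → ℝ) → ℝ :=
      ((fun (u : Fin n → ℝ) (j : {x // x ∈ v}) => u ↑j) ⁻¹' t).indicator (fun _ => 1) with hχdef
    have hχmeas : Measurable χ := measurable_const.indicator hst
    have hχ_bdd : ∀ u, ‖χ u‖ ≤ 1 := by
      intro u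
      rw [hχdef]
      by_cases h : u ∈ (fun (u : Fin n → ℝ) (j : {x // x ∈ v}) => u ↑j) ⁻¹' t
      · rw [Set.indicator_of_mem h]; simp
      · rw [Set.indicator_of_notMem h]; simp
    have hχpatch : ∀ u y, χ (patchFn v u y) = χ u := by
      intro u y
      have hmem : patchFn v u y ∈ ((fun (u : Fin n → ℝ) (j : {x // x ∈ v}) => u ↑j) ⁻¹' t)
          ↔ u ∈ ((fun (u : Fin n → ℝ) (j : {x // x ∈ v}) => u ↑j) ⁻¹' t) := by
        simp only [Set.mem_preimage]
        have harg : (fun j : {x // x ∈ v} => patchFn v u y ↑j)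
            = fun j : {x // x ∈ v} => u ↑j := by
          funext j
          simp [patchFn, j.2]
        rw [harg]
      rw [hχdef]
      by_cases h : u ∈ (fun (u : Fin n → ℝ) (j : {x // x ∈ v}) => u ↑j) ⁻¹' t
      · rw [Set.indicator_of_mem (hmem.2 h), Set.indicator_of_mem h]
      · rw [Set.indicator_of_notMem (fun hc => h (hmem.1 hc)),
          Set.indicator_of_notMem h]
    have hind1 : ∀ h : (Fin n → ℝ) → ℝ,
        ∫ x in ((fun (u : Fin n → ℝ) (j : {x // x ∈ v}) => u ↑j) ⁻¹' t), h x ∂(stdGaussian (Fin n))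
          = ∫ x, χ x * h x ∂(stdGaussian (Fin n)) := by
      intro h
      rw [← integral_indicator hst]
      congr 1
      funext u
      rw [hχdef]
      by_cases hu : u ∈ (fun (u : Fin n → ℝ) (j : {x // x ∈ v}) => u ↑j) ⁻¹' t
      · rw [Set.indicator_of_mem hu, Set.indicator_of_mem hu]; ring
      · rw [Set.indicator_of_notMem hu, Set.indicator_of_notMem hu]; ring
    rw [hind1 g, hind1 f]
    have hkmeas : Measurable (fun p : (Fin n → ℝ) × (Fin n → ℝ) =>
        χ p.1 * f (patchFn v p.1 p.2)) := (hχmeas.comp measurable_fst).mul hfpm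
    have hkbdd : ∀ p : (Fin n → ℝ) × (Fin n → ℝ), ‖χ p.1 * f (patchFn v p.1 p.2)‖ ≤ 1 := by
      intro p
      rw [norm_mul]
      calc ‖χ p.1‖ * ‖f (patchFn v p.1 p.2)‖ ≤ 1 * 1 :=
            mul_le_mul (hχ_bdd _) (hf_bdd _) (norm_nonneg _) zero_le_one
        _ = 1 := one_mul 1
    have hkint : Integrable (fun p : (Fin n → ℝ) × (Fin n → ℝ) =>
        χ p.1 * f (patchFn v p.1 p.2))
        (((stdGaussian (Fin n)).prod (stdGaussian (Fin n)))) :=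
      Integrable.mono' (integrable_const 1) hkmeas.aestronglyMeasurable (ae_of_all _ hkbdd)
    calc ∫ x, χ x * g x ∂(stdGaussian (Fin n))
        = ∫ x, (∫ y, χ x * f (patchFn v x y) ∂(stdGaussian (Fin n)))
            ∂(stdGaussian (Fin n)) := by
          refine integral_congr_ae (ae_of_all _ fun u => ?_)
          rw [hgdef]
          exact (integral_const_mul _ _).symm
      _ = ∫ p, χ p.1 * f (patchFn v p.1 p.2)
            ∂((stdGaussian (Fin n)).prod (stdGaussian (Fin n))) := integral_integral hkint
      _ = ∫ p, χ (patchFn v p.1 p.2)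
            * f (patchFn v (patchFn v p.1 p.2) (patchFn v p.2 p.1))
            ∂((stdGaussian (Fin n)).prod (stdGaussian (Fin n))) :=
          integral_comp_TFn v _ hkmeas.aestronglyMeasurable
      _ = ∫ p, χ p.1 * f p.1 ∂((stdGaussian (Fin n)).prod (stdGaussian (Fin n))) := by
          refine integral_congr_ae (ae_of_all _ fun p => ?_)
          simp only [hχpatch, patchFn_patchFn']
      _ = ∫ x, χ x * f x ∂(stdGaussian (Fin n)) :=
          integral_fst_prod v _ ((hχmeas.mul hfmeas).aestronglyMeasurable)
  -- identify the conditional expectation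
  have hg_cond : g =ᵐ[stdGaussian (Fin n)] (stdGaussian (Fin n))[f | mVd n v] :=
    ae_eq_condExp_of_forall_setIntegral_eq hm hf_int
      (fun s _ _ => hg_int.integrableOn) hsetint hg_aesm
  -- first moment
  have hint0 : Integrable (fun p : (Fin n → ℝ) × (Fin n → ℝ) => f (patchFn v p.1 p.2))
      ((stdGaussian (Fin n)).prod (stdGaussian (Fin n))) :=
    Integrable.mono' (integrable_const 1) hfpm.aestronglyMeasurable
      (ae_of_all _ fun p => hf_bdd _)
  have hEg : ∫ u, g u ∂(stdGaussian (Fin n)) = ((stdGaussian (Fin n)) Fser).toReal := by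
    calc ∫ u, g u ∂(stdGaussian (Fin n))
        = ∫ x, ∫ y, f (patchFn v x y) ∂(stdGaussian (Fin n)) ∂(stdGaussian (Fin n)) := rfl
      _ = ∫ p, f (patchFn v p.1 p.2) ∂((stdGaussian (Fin n)).prod (stdGaussian (Fin n))) :=
          integral_integral (f := fun x y => f (patchFn v x y)) hint0
      _ = ∫ u, f u ∂(stdGaussian (Fin n)) :=
          integral_comp_patchFn v f hfmeas.aestronglyMeasurable
      _ = ((stdGaussian (Fin n)) Fser).toReal := by
          rw [hfdef]; exact integral_indicator_one hFmeas
  -- second moment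
  have hgf_meas : Measurable (fun p : (Fin n → ℝ) × (Fin n → ℝ) =>
      g p.1 * f (patchFn v p.1 p.2)) := (hgmeas.comp measurable_fst).mul hfpm
  have hgf_int : Integrable (fun p : (Fin n → ℝ) × (Fin n → ℝ) =>
      g p.1 * f (patchFn v p.1 p.2)) ((stdGaussian (Fin n)).prod (stdGaussian (Fin n))) := by
    refine Integrable.mono' (integrable_const 1) hgf_meas.aestronglyMeasurable
      (ae_of_all _ fun p => ?_)
    rw [norm_mul]
    calc ‖g p.1‖ * ‖f (patchFn v p.1 p.2)‖ ≤ 1 * 1 :=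
          mul_le_mul (hg_bdd _) (hf_bdd _) (norm_nonneg _) zero_le_one
      _ = 1 := one_mul 1
  have hff_meas : Measurable (fun p : (Fin n → ℝ) × (Fin n → ℝ) =>
      f p.1 * f (patchFn v p.1 p.2)) := (hfmeas.comp measurable_fst).mul hfpm
  have hff_int : Integrable (fun p : (Fin n → ℝ) × (Fin n → ℝ) =>
      f p.1 * f (patchFn v p.1 p.2)) ((stdGaussian (Fin n)).prod (stdGaussian (Fin n))) := by
    refine Integrable.mono' (integrable_const 1) hff_meas.aestronglyMeasurable
      (ae_of_all _ fun p => ?_)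
    rw [norm_mul]
    calc ‖f p.1‖ * ‖f (patchFn v p.1 p.2)‖ ≤ 1 * 1 :=
          mul_le_mul (hf_bdd _) (hf_bdd _) (norm_nonneg _) zero_le_one
      _ = 1 := one_mul 1
  set D : Set ((Fin n → ℝ) × (Fin n → ℝ)) := {p | p.1 ∈ Fser ∧ patchFn v p.1 p.2 ∈ Fser}
    with hDdef
  have hDeq' : D = Prod.fst ⁻¹' Fser ∩
      (fun p : (Fin n → ℝ) × (Fin n → ℝ) => patchFn v p.1 p.2) ⁻¹' Fser := by
    ext p; simp [hDdef]
  have hDmeas : MeasurableSet D := by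
    rw [hDeq']
    exact (measurable_fst hFmeas).inter ((measurable_patchFn v) hFmeas)
  have hEg2 : ∫ u, g u ^ 2 ∂(stdGaussian (Fin n))
      = (((stdGaussian (Fin n)).prod (stdGaussian (Fin n))) D).toReal := by
    calc ∫ u, g u ^ 2 ∂(stdGaussian (Fin n))
        = ∫ x, ∫ y, g x * f (patchFn v x y) ∂(stdGaussian (Fin n)) ∂(stdGaussian (Fin n)) := by
          refine integral_congr_ae (ae_of_all _ fun u => ?_)
          show g u ^ 2 = ∫ y, g u * f (patchFn v u y) ∂(stdGaussian (Fin n))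
          rw [sq]
          nth_rewrite 2 [hgdef]
          exact (integral_const_mul _ _).symm
      _ = ∫ p, g p.1 * f (patchFn v p.1 p.2)
            ∂((stdGaussian (Fin n)).prod (stdGaussian (Fin n))) :=
          integral_integral (f := fun x y => g x * f (patchFn v x y)) hgf_int
      _ = ∫ p, g (patchFn v p.1 p.2)
            * f (patchFn v (patchFn v p.1 p.2) (patchFn v p.2 p.1))
            ∂((stdGaussian (Fin n)).prod (stdGaussian (Fin n))) :=
          integral_comp_TFn v _ hgf_meas.aestronglyMeasurable
      _ = ∫ p, g p.1 * f p.1 ∂((stdGaussian (Fin n)).prod (stdGaussian (Fin n))) := by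
          refine integral_congr_ae (ae_of_all _ fun p => ?_)
          simp only [hg_patch, patchFn_patchFn']
      _ = ∫ u, g u * f u ∂(stdGaussian (Fin n)) :=
          integral_fst_prod v _ (hgmeas.mul hfmeas).aestronglyMeasurable
      _ = ∫ x, ∫ y, f x * f (patchFn v x y) ∂(stdGaussian (Fin n)) ∂(stdGaussian (Fin n)) := by
          refine integral_congr_ae (ae_of_all _ fun u => ?_)
          show g u * f u = ∫ y, f u * f (patchFn v u y) ∂(stdGaussian (Fin n))
          rw [mul_comm]
          nth_rewrite 1 [hgdef]
          exact (integral_const_mul _ _).symm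
      _ = ∫ p, f p.1 * f (patchFn v p.1 p.2)
            ∂((stdGaussian (Fin n)).prod (stdGaussian (Fin n))) :=
          integral_integral (f := fun x y => f x * f (patchFn v x y)) hff_int
      _ = ∫ p, D.indicator (fun _ => (1 : ℝ)) p
            ∂((stdGaussian (Fin n)).prod (stdGaussian (Fin n))) := by
          refine integral_congr_ae (ae_of_all _ fun p => ?_)
          show f p.1 * f (patchFn v p.1 p.2) = D.indicator (fun _ => (1 : ℝ)) p
          rw [hfdef]
          by_cases h1 : p.1 ∈ Fser <;> by_cases h2 : patchFn v p.1 p.2 ∈ Fser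
          · rw [Set.indicator_of_mem h1, Set.indicator_of_mem h2,
              Set.indicator_of_mem (show p ∈ D from ⟨h1, h2⟩)]
            norm_num
          · rw [Set.indicator_of_mem h1, Set.indicator_of_notMem h2,
              Set.indicator_of_notMem (show p ∉ D from fun hc => h2 hc.2)]
            norm_num
          · rw [Set.indicator_of_notMem h1, Set.indicator_of_mem h2,
              Set.indicator_of_notMem (show p ∉ D from fun hc => h1 hc.1)]
            norm_num
          · rw [Set.indicator_of_notMem h1, Set.indicator_of_notMem h2,
              Set.indicator_of_notMem (show p ∉ D from fun hc => h1 hc.1)]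
            norm_num
      _ = (((stdGaussian (Fin n)).prod (stdGaussian (Fin n))) D).toReal :=
          integral_indicator_one hDmeas
  -- the block set is the preimage of Dc
  have hmul1 : ∀ (w : (Fin n ⊕ Fin n) → ℝ) (i : Fin m),
      (Mblock m n A v).mulVec w (Sum.inl i) = A.mulVec (fun j => w (Sum.inl j)) i := by
    intro w i
    simp only [Matrix.mulVec, dotProduct]
    rw [Fintype.sum_sum_type]
    simp [Mblock]
  have hmul2 : ∀ (w : (Fin n ⊕ Fin n) → ℝ) (i : Fin m),
      (Mblock m n A v).mulVec w (Sum.inr i)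
        = A.mulVec (patchFn v (fun j => w (Sum.inl j)) (fun j => w (Sum.inr j))) i := by
    intro w i
    simp only [Matrix.mulVec, dotProduct]
    rw [Fintype.sum_sum_type, ← Finset.sum_add_distrib]
    refine Finset.sum_congr rfl fun j _ => ?_
    by_cases h : j ∈ v <;> simp [Mblock, patchFn, h]
  set Dc : Set ((Fin n → ℝ) × (Fin n → ℝ)) := {p | p.1 ∈ C ∧ patchFn v p.1 p.2 ∈ C}
    with hDcdef
  have hDceq' : Dc = Prod.fst ⁻¹' C ∩
      (fun p : (Fin n → ℝ) × (Fin n → ℝ) => patchFn v p.1 p.2) ⁻¹' C := by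
    ext p; simp [hDcdef]
  have hDcmeas : MeasurableSet Dc := by
    rw [hDceq']
    exact (measurable_fst hCmeas).inter ((measurable_patchFn v) hCmeas)
  have hBeq : {w : (Fin n ⊕ Fin n) → ℝ | ∀ i, (Mblock m n A v).mulVec w i
      ≤ Sum.elim (fun k => β k) (fun k => β k) i} = (e2 n) ⁻¹' Dc := by
    ext w
    simp only [Set.mem_setOf_eq, Set.mem_preimage, e2_apply, hDcdef, hCdef]
    constructor
    · intro h
      exact ⟨fun i => by simpa [hmul1] using h (Sum.inl i),
             fun i => by simpa [hmul2] using h (Sum.inr i)⟩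
    · rintro ⟨h1, h2⟩ (i | i)
      · simpa [hmul1] using h1 i
      · simpa [hmul2] using h2 i
  have hWB : (stdGaussian (Fin n ⊕ Fin n)) {w : (Fin n ⊕ Fin n) → ℝ |
        ∀ i, (Mblock m n A v).mulVec w i ≤ Sum.elim (fun k => β k) (fun k => β k) i}
      = ((stdGaussian (Fin n)).prod (stdGaussian (Fin n))) Dc := by
    rw [hBeq]
    conv_rhs => rw [prod_eq_map_e2]
    rw [Measure.map_apply (e2 n).measurable hDcmeas]
  -- inclusion-exclusion through the null boundary
  set E1 : Set ((Fin n → ℝ) × (Fin n → ℝ)) := Prod.fst ⁻¹' Fser with hE1def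
  set E2 : Set ((Fin n → ℝ) × (Fin n → ℝ)) :=
    (fun p : (Fin n → ℝ) × (Fin n → ℝ) => patchFn v p.1 p.2) ⁻¹' Fser with hE2def
  have hE1meas : MeasurableSet E1 := measurable_fst hFmeas
  have hE2meas : MeasurableSet E2 := (measurable_patchFn v) hFmeas
  have hN1 : ((stdGaussian (Fin n)).prod (stdGaussian (Fin n))) (Prod.fst ⁻¹' N) = 0 := by
    have husz : (Prod.fst ⁻¹' N : Set ((Fin n → ℝ) × (Fin n → ℝ)))
        = N ×ˢ (Set.univ : Set (Fin n → ℝ)) := by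
      ext p; simp [Set.mem_prod]
    rw [husz, Measure.prod_prod, hNnull, zero_mul]
  have hN2 : ((stdGaussian (Fin n)).prod (stdGaussian (Fin n)))
      ((fun p : (Fin n → ℝ) × (Fin n → ℝ) => patchFn v p.1 p.2) ⁻¹' N) = 0 := by
    have h := Measure.map_apply (μ := (stdGaussian (Fin n)).prod (stdGaussian (Fin n)))
      (measurable_patchFn v) hNmeas
    rw [map_patchFn v] at h
    rw [← h, hNnull]
  have hae1 : (Prod.fst ⁻¹' C : Set ((Fin n → ℝ) × (Fin n → ℝ)))
      =ᵐ[(stdGaussian (Fin n)).prod (stdGaussian (Fin n))] (E1ᶜ : Set _) := by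
    rw [ae_eq_set]
    constructor
    · refine measure_mono_null ?_ hN1
      rintro p ⟨hpC, hpF⟩
      have hpF' : p.1 ∈ Fser := by simpa [hE1def] using hpF
      exact hsubN ⟨hpF', hpC⟩
    · have hempty : (E1ᶜ \ (Prod.fst ⁻¹' C) : Set ((Fin n → ℝ) × (Fin n → ℝ))) = ∅ := by
        refine Set.eq_empty_iff_forall_notMem.2 fun p hp => ?_
        obtain ⟨h1, h2⟩ := hp
        have hp2 : p.1 ∈ Fser ∪ C := by rw [hFC_union]; trivial
        rcases hp2 with h | h
        · exact h1 h
        · exact h2 h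
      rw [hempty]
      exact measure_empty
  have hae2 : ((fun p : (Fin n → ℝ) × (Fin n → ℝ) => patchFn v p.1 p.2) ⁻¹' C)
      =ᵐ[(stdGaussian (Fin n)).prod (stdGaussian (Fin n))] (E2ᶜ : Set _) := by
    rw [ae_eq_set]
    constructor
    · refine measure_mono_null ?_ hN2
      rintro p ⟨hpC, hpF⟩
      have hpF' : patchFn v p.1 p.2 ∈ Fser := by simpa [hE2def] using hpF
      exact hsubN ⟨hpF', hpC⟩
    · have hempty : (E2ᶜ \ ((fun p : (Fin n → ℝ) × (Fin n → ℝ) => patchFn v p.1 p.2) ⁻¹' C)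
          : Set ((Fin n → ℝ) × (Fin n → ℝ))) = ∅ := by
        refine Set.eq_empty_iff_forall_notMem.2 fun p hp => ?_
        obtain ⟨h1, h2⟩ := hp
        have hp2 : patchFn v p.1 p.2 ∈ Fser ∪ C := by rw [hFC_union]; trivial
        rcases hp2 with h | h
        · exact h1 h
        · exact h2 h
      rw [hempty]
      exact measure_empty
  have hDc_aeq : ((stdGaussian (Fin n)).prod (stdGaussian (Fin n))) Dc
      = ((stdGaussian (Fin n)).prod (stdGaussian (Fin n))) ((E1 ∪ E2)ᶜ) := by
    rw [hDceq', Set.compl_union]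
    exact measure_congr (hae1.inter hae2)
  have hDeqE : D = E1 ∩ E2 := by
    rw [hDeq', hE1def, hE2def]
  have hPE1 : ((stdGaussian (Fin n)).prod (stdGaussian (Fin n))) E1
      = (stdGaussian (Fin n)) Fser := by
    have husz : E1 = Fser ×ˢ (Set.univ : Set (Fin n → ℝ)) := by
      ext p; simp [hE1def, Set.mem_prod]
    rw [husz, Measure.prod_prod, measure_univ, mul_one]
  have hPE2 : ((stdGaussian (Fin n)).prod (stdGaussian (Fin n))) E2
      = (stdGaussian (Fin n)) Fser := by
    have h := Measure.map_apply (μ := (stdGaussian (Fin n)).prod (stdGaussian (Fin n)))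
      (measurable_patchFn v) hFmeas
    rw [map_patchFn v] at h
    rw [hE2def, ← h]
  have hcompl : ((stdGaussian (Fin n)).prod (stdGaussian (Fin n))) ((E1 ∪ E2)ᶜ)
      = 1 - ((stdGaussian (Fin n)).prod (stdGaussian (Fin n))) (E1 ∪ E2) :=
    prob_compl_eq_one_sub (hE1meas.union hE2meas)
  have hui := measure_union_add_inter
    (μ := (stdGaussian (Fin n)).prod (stdGaussian (Fin n))) E1 hE2meas
  have hui' := congrArg ENNReal.toReal hui
  rw [ENNReal.toReal_add (measure_ne_top _ _) (measure_ne_top _ _),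
      ENNReal.toReal_add (measure_ne_top _ _) (measure_ne_top _ _), hPE1, hPE2] at hui'
  have hWBr : ((stdGaussian (Fin n ⊕ Fin n)) {w : (Fin n ⊕ Fin n) → ℝ |
        ∀ i, (Mblock m n A v).mulVec w i ≤ Sum.elim (fun k => β k) (fun k => β k) i}).toReal
      = 1 - (((stdGaussian (Fin n)).prod (stdGaussian (Fin n))) (E1 ∪ E2)).toReal := by
    rw [hWB, hDc_aeq, hcompl, ENNReal.toReal_sub_of_le prob_le_one ENNReal.one_ne_top,
      ENNReal.toReal_one]
  -- conclude
  rw [← variance_congr_ae hg_cond, variance_eq_sub hg_mem]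
  have hgsq : (stdGaussian (Fin n))[g ^ 2] = ∫ u, g u ^ 2 ∂(stdGaussian (Fin n)) := rfl
  have hgint' : (stdGaussian (Fin n))[g] = ∫ u, g u ∂(stdGaussian (Fin n)) := rfl
  rw [hgsq, hgint', hEg2, hEg, hWBr, hDeqE]
  ring_nf
  linarith [hui']

end SeriesVar

/-- For the series system `F_ser = ∪ᵢ {αᵢᵀU ≥ βᵢ}` one has
`Var(E[1_{F_ser} | U_v]) = Φ_{2m}([B;B]; [[R, R_v],[R_v, R]]) − (1 − P(F_ser))²`,
where `P(F_ser) = 1 − Φ_m(B; R)`. -/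
theorem stmt13 (m n : ℕ) (A : Matrix (Fin m) (Fin n) ℝ) (hA : ∀ i, ∑ j, (A i j) ^ 2 = 1)
    (β : Fin m → ℝ) (v : Finset (Fin n)) :
    let μ := stdGaussian (Fin n)
    let Fser := {u : Fin n → ℝ | ∃ i, β i ≤ A.mulVec u i}
    let mV : MeasurableSpace (Fin n → ℝ) :=
      MeasurableSpace.comap (fun u (j : {x // x ∈ v}) => u j) inferInstance
    let PhiM : ℝ := (μ {u | ∀ i, A.mulVec u i ≤ β i}).toReal
    variance (μ[Fser.indicator (fun _ => (1 : ℝ)) | mV]) μ =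
        ((stdGaussian (Fin n ⊕ Fin n))
          {w | ∀ i, (Mblock m n A v).mulVec w i
              ≤ Sum.elim (fun k => β k) (fun k => β k) i}).toReal
          - (1 - (μ Fser).toReal) ^ 2
      ∧ (μ Fser).toReal = 1 - PhiM := by
  intro μ Fser mV PhiM
  exact ⟨series_var A hA β v, series_conj2 A hA β⟩
end
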